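/- Let I ⊆ ℝ^{l×p} be an interval matrix, M ⊆ ℝ^{p×q} a matrix zonotope, and j ∈ ℕ. Then I^j M = {N₁⋯N_j P | N₁,…,N_j ∈ I, P ∈ M} ⊆ T_I^j(M), where T_I^j denotes the j-fold composition of the operator T_I. -/

import Mathlib

/-- Interval matrix C ⊕ [−Δ, Δ]. -/
def intv {p q : ℕ} (C Δ : Matrix (Fin p) (Fin q) ℝ) : Set (Matrix (Fin p) (Fin q) ℝ) :=
  {M | ∀ i j, |M i j - C i j| ≤ Δ i j}

/-- Entrywise absolute value of a matrix. -/
def aent {p q : ℕ} (M : Matrix (Fin p) (Fin q) ℝ) : Matrix (Fin p) (Fin q) ℝ :=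
  Matrix.of fun i j => |M i j|

/-- Matrix zonotope with a list of generators. -/
def zonoL {p q : ℕ} (C : Matrix (Fin p) (Fin q) ℝ)
    (G : List (Matrix (Fin p) (Fin q) ℝ)) : Set (Matrix (Fin p) (Fin q) ℝ) :=
  {M | ∃ β : Fin G.length → ℝ, (∀ i, |β i| ≤ 1) ∧ M = C + ∑ i, β i • G.get i}

/-- Entrywise decomposition: `edec M k` keeps the entry of `M` at position `k`. -/
def edec {l q : ℕ} (M : Matrix (Fin l) (Fin q) ℝ) (k : Fin l × Fin q) :
    Matrix (Fin l) (Fin q) ℝ :=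
  Matrix.of fun i j => if (i, j) = k then M i j else 0

/-- The entrywise decomposition E(M), as a list of matrices. -/
noncomputable def edecL {l q : ℕ} (M : Matrix (Fin l) (Fin q) ℝ) : List (Matrix (Fin l) (Fin q) ℝ) :=
  (Finset.univ : Finset (Fin l × Fin q)).toList.map (edec M)

/-- The operator T_I on (center, generator-list) representations of matrix zonotopes:
T_I(⟨M_C; G⟩) = ⟨C M_C; C G₁,…,C G_g, E(F)⟩ with F = Δ(|M_C| + Σⱼ|Gⱼ|),
for the interval matrix I = C ⊕ [−Δ, Δ]. -/
noncomputable def Tmap {n q : ℕ} (C Δ : Matrix (Fin n) (Fin n) ℝ)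
    (Z : Matrix (Fin n) (Fin q) ℝ × List (Matrix (Fin n) (Fin q) ℝ)) :
    Matrix (Fin n) (Fin q) ℝ × List (Matrix (Fin n) (Fin q) ℝ) :=
  (C * Z.1, Z.2.map (fun X => C * X) ++ edecL (Δ * (aent Z.1 + (Z.2.map aent).sum)))

/-- I^j M = {N₁⋯N_j P | Nᵢ ∈ I, P ∈ M}. -/
def powProd {n q : ℕ} (I : Set (Matrix (Fin n) (Fin n) ℝ)) (j : ℕ)
    (Mset : Set (Matrix (Fin n) (Fin q) ℝ)) : Set (Matrix (Fin n) (Fin q) ℝ) :=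
  {x | ∃ Ns : Fin j → Matrix (Fin n) (Fin n) ℝ, (∀ i, Ns i ∈ I) ∧
    ∃ P ∈ Mset, x = (List.ofFn Ns).prod * P}

-- gsum: the "generator part" of a zonotope
def gsum {p q : ℕ} (L : List (Matrix (Fin p) (Fin q) ℝ)) : Set (Matrix (Fin p) (Fin q) ℝ) :=
  {x | ∃ β : Fin L.length → ℝ, (∀ i, |β i| ≤ 1) ∧ x = ∑ i, β i • L.get i}

lemma mem_zonoL_iff {p q : ℕ} (C : Matrix (Fin p) (Fin q) ℝ) (L : List _) (M) :
    M ∈ zonoL C L ↔ ∃ x ∈ gsum L, M = C + x := by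
  constructor
  · rintro ⟨β, hβ, rfl⟩; exact ⟨_, ⟨β, hβ, rfl⟩, rfl⟩
  · rintro ⟨x, ⟨β, hβ, rfl⟩, rfl⟩; exact ⟨β, hβ, rfl⟩

lemma gsum_append {p q : ℕ} {A B : List (Matrix (Fin p) (Fin q) ℝ)} {x y}
    (hx : x ∈ gsum A) (hy : y ∈ gsum B) : x + y ∈ gsum (A ++ B) := by
  obtain ⟨βA, hβA, rfl⟩ := hx
  obtain ⟨βB, hβB, rfl⟩ := hy
  have h : (A ++ B).length = A.length + B.length := List.length_append
  have hb : ∀ k : Fin (A.length + B.length), |Fin.append βA βB k| ≤ 1 := by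
    refine Fin.addCases (fun i' => ?_) (fun i' => ?_) <;>
      simp [Fin.append_left, Fin.append_right, hβA, hβB]
  refine ⟨fun i => Fin.append βA βB (Fin.cast h i), fun i => hb _, ?_⟩
  rw [← Equiv.sum_comp (finCongr h.symm)
    (fun i => (fun i => Fin.append βA βB (Fin.cast h i)) i • (A ++ B).get i)]
  rw [Fin.sum_univ_add]
  congr 1
  · refine Finset.sum_congr rfl fun i _ => ?_
    simp [Fin.append_left, List.getElem_append_left, List.get_eq_getElem]
  · refine Finset.sum_congr rfl fun i _ => ?_
    simp [Fin.append_right, List.getElem_append_right, List.get_eq_getElem]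

lemma gsum_mul {n p q : ℕ} (C : Matrix (Fin n) (Fin p) ℝ)
    {G : List (Matrix (Fin p) (Fin q) ℝ)} {x} (hx : x ∈ gsum G) :
    C * x ∈ gsum (G.map (fun X => C * X)) := by
  obtain ⟨β, hβ, rfl⟩ := hx
  have h : (G.map (fun X => C * X)).length = G.length := List.length_map _
  refine ⟨fun i => β (Fin.cast h i), fun i => hβ _, ?_⟩
  rw [← Equiv.sum_comp (finCongr h.symm) (fun i => β (Fin.cast h i) • (G.map _).get i)]
  rw [Matrix.mul_sum]
  refine Finset.sum_congr rfl fun i _ => ?_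
  simp [Matrix.mul_smul]

lemma gsum_bound {p q : ℕ} {G : List (Matrix (Fin p) (Fin q) ℝ)} {x}
    (hx : x ∈ gsum G) (k : Fin p) (j : Fin q) :
    |x k j| ≤ ((G.map aent).sum) k j := by
  obtain ⟨β, hβ, rfl⟩ := hx
  have hs : (G.map aent).sum = ∑ i : Fin G.length, aent (G.get i) := by
    rw [← Fin.sum_univ_fun_getElem G aent]; rfl
  rw [hs]
  rw [Matrix.sum_apply, Matrix.sum_apply]
  refine (Finset.abs_sum_le_sum_abs _ _).trans (Finset.sum_le_sum fun i _ => ?_)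
  have : ((β i • G.get i) k) j = β i * G.get i k j := rfl
  rw [this, abs_mul]
  calc |β i| * |G.get i k j| ≤ 1 * |G.get i k j| :=
        mul_le_mul_of_nonneg_right (hβ i) (abs_nonneg _)
    _ = aent (G.get i) k j := by simp [aent]

lemma mem_gsum_edecL {l q : ℕ} {E F : Matrix (Fin l) (Fin q) ℝ}
    (hE : ∀ i j, |E i j| ≤ F i j) : E ∈ gsum (edecL F) := by
  classical
  set c : Fin l × Fin q → ℝ :=
    fun k => if F k.1 k.2 = 0 then 0 else E k.1 k.2 / F k.1 k.2 with hc
  have hcb : ∀ k, |c k| ≤ 1 := by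
    intro k
    by_cases hF : F k.1 k.2 = 0
    · simp [hc, hF]
    · have hFpos : 0 < F k.1 k.2 :=
        lt_of_le_of_ne (le_trans (abs_nonneg _) (hE k.1 k.2)) (Ne.symm hF)
      simp only [hc, if_neg hF, abs_div, abs_of_pos hFpos]
      rw [div_le_one hFpos]
      exact hE k.1 k.2
  have hdec : E = ∑ k : Fin l × Fin q, c k • edec F k := by
    ext i j
    rw [Matrix.sum_apply]
    have : ∀ k : Fin l × Fin q, ((c k • edec F k) i) j
        = if (i, j) = k then c k * F i j else 0 := by
      intro k; simp [edec, mul_ite]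
    simp_rw [this]
    rw [Finset.sum_ite_eq]
    simp only [Finset.mem_univ, if_true]
    by_cases hF : F i j = 0
    · have : |E i j| ≤ 0 := hF ▸ hE i j
      have hE0 : E i j = 0 := abs_nonpos_iff.mp this
      simp [hE0, hc, hF]
    · simp [hc, hF, div_mul_cancel₀]
  set L := (Finset.univ : Finset (Fin l × Fin q)).toList with hL
  have hlen : (edecL F).length = L.length := by rw [hL]; simp [edecL]
  refine ⟨fun i => c (L.get (Fin.cast hlen i)), fun i => hcb _, ?_⟩
  rw [hdec, ← Equiv.sum_comp (finCongr hlen.symm)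
    (fun i => c (L.get (Fin.cast hlen i)) • (edecL F).get i)]
  have key : ∀ i : Fin L.length,
      c (L.get (Fin.cast hlen (finCongr hlen.symm i))) • (edecL F).get (finCongr hlen.symm i)
        = c (L.get i) • edec F (L.get i) := by
    intro i
    have h1 : Fin.cast hlen (finCongr hlen.symm i) = i := Fin.ext rfl
    have h2 : (edecL F).get (finCongr hlen.symm i) = edec F (L.get i) := by
      simp [edecL, hL, List.get_eq_getElem]
      rfl
    rw [h1, h2]
  calc ∑ k : Fin l × Fin q, c k • edec F k
      = (L.map fun k => c k • edec F k).sum := by rw [hL, Finset.sum_map_toList]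
    _ = ∑ i : Fin L.length, c (L.get i) • edec F (L.get i) :=
        (Fin.sum_univ_fun_getElem L _).symm
    _ = _ := Finset.sum_congr rfl fun i _ => (key i).symm

lemma step_lemma {n q : ℕ} {C Δ : Matrix (Fin n) (Fin n) ℝ} (hΔ : ∀ i j, 0 ≤ Δ i j)
    {N : Matrix (Fin n) (Fin n) ℝ} (hN : N ∈ intv C Δ)
    {Z : Matrix (Fin n) (Fin q) ℝ × List (Matrix (Fin n) (Fin q) ℝ)}
    {P : Matrix (Fin n) (Fin q) ℝ} (hP : P ∈ zonoL Z.1 Z.2) :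
    N * P ∈ zonoL (Tmap C Δ Z).1 (Tmap C Δ Z).2 := by
  rw [mem_zonoL_iff] at hP ⊢
  obtain ⟨x, hx, rfl⟩ := hP
  set F := Δ * (aent Z.1 + (Z.2.map aent).sum) with hF
  have hDP : ∀ i j, |((N - C) * (Z.1 + x)) i j| ≤ F i j := by
    intro i j
    have : ((N - C) * (Z.1 + x)) i j = ∑ k, (N - C) i k * (Z.1 + x) k j := Matrix.mul_apply
    rw [this, hF, Matrix.mul_apply]
    refine (Finset.abs_sum_le_sum_abs _ _).trans (Finset.sum_le_sum fun k _ => ?_)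
    rw [abs_mul]
    have h1 : |(N - C) i k| ≤ Δ i k := hN i k
    have h2 : |(Z.1 + x) k j| ≤ (aent Z.1 + (Z.2.map aent).sum) k j := by
      have : (Z.1 + x) k j = Z.1 k j + x k j := rfl
      rw [this]
      refine (abs_add_le _ _).trans ?_
      have : (aent Z.1 + (Z.2.map aent).sum) k j = aent Z.1 k j + (Z.2.map aent).sum k j := rfl
      rw [this]
      exact add_le_add (le_of_eq rfl) (gsum_bound hx k j)
    calc |(N - C) i k| * |(Z.1 + x) k j| ≤ Δ i k * ((aent Z.1 + (Z.2.map aent).sum) k j) :=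
      mul_le_mul h1 h2 (abs_nonneg _) (hΔ i k)
      _ = _ := rfl
  have hmem : (N - C) * (Z.1 + x) ∈ gsum (edecL F) := mem_gsum_edecL hDP
  refine ⟨C * x + (N - C) * (Z.1 + x), gsum_append (gsum_mul C hx) hmem, ?_⟩
  show N * (Z.1 + x) = C * Z.1 + (C * x + (N - C) * (Z.1 + x))
  rw [Matrix.sub_mul, Matrix.mul_add, Matrix.mul_add]
  abel

/-- I^j M ⊆ T_I^j(M). -/
theorem stmt10 {n q : ℕ} (C Δ : Matrix (Fin n) (Fin n) ℝ) (hΔ : ∀ i j, 0 ≤ Δ i j)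
    (Mc : Matrix (Fin n) (Fin q) ℝ) (G : List (Matrix (Fin n) (Fin q) ℝ)) (j : ℕ) :
    powProd (intv C Δ) j (zonoL Mc G) ⊆
      zonoL ((Tmap C Δ)^[j] (Mc, G)).1 ((Tmap C Δ)^[j] (Mc, G)).2 := by
  induction j with
  | zero =>
    rintro x ⟨Ns, hNs, P, hP, rfl⟩
    simpa using hP
  | succ j ih =>
    rintro x ⟨Ns, hNs, P, hP, rfl⟩
    have hofn : (List.ofFn Ns).prod = Ns 0 * (List.ofFn fun i : Fin j => Ns i.succ).prod := by
      rw [List.ofFn_succ]; rfl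
    rw [hofn, Matrix.mul_assoc]
    have hrest : (List.ofFn fun i : Fin j => Ns i.succ).prod * P ∈
        zonoL ((Tmap C Δ)^[j] (Mc, G)).1 ((Tmap C Δ)^[j] (Mc, G)).2 :=
      ih ⟨fun i => Ns i.succ, fun i => hNs _, P, hP, rfl⟩
    have := step_lemma hΔ (hNs 0) (Z := (Tmap C Δ)^[j] (Mc, G)) hrest
    rwa [Function.iterate_succ_apply']
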